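/- arXiv:2207.04944 — 2 statements merged into one kernel-verified Lean document; each statement's English description precedes it below -/
import Mathlib

section
/- There exists a function f ∈ L²(△, |z|² dV) on the unit disc △ ⊂ ℂ such that R₁f(z) = ∫_△ f(ζ)/|ζ−z| dV(ζ) does not belong to L²(△, |z|² dV); hence the weighted boundedness of R_α on L^p(D,μ) fails in general without the assumption μ ∈ A_p. -/
open MeasureTheory
open scoped ENNReal NNReal

noncomputable section

namespace RieszCE

/-- The dyadic annulus `{z : (1/2)^(n+1) < ‖z‖ ≤ (1/2)^n}`. -/
def Ann (n : ℕ) : Set ℂ :=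
  Metric.closedBall 0 ((1/2 : ℝ) ^ n) \ Metric.closedBall 0 ((1/2 : ℝ) ^ (n+1))

/-- The constant value on the `n`-th annulus. -/
def cf (n : ℕ) : ℝ := 4 ^ n / (n + 1)

/-- The counterexample function. -/
def ff (z : ℂ) : ℝ := cf ⌊Real.logb 2 ‖z‖⁻¹⌋₊

lemma cf_pos (n : ℕ) : 0 < cf n := by
  unfold cf; positivity

lemma ff_nonneg (z : ℂ) : 0 ≤ ff z := (cf_pos _).le

lemma measurable_ff : Measurable ff := by
  have h : Measurable fun z : ℂ => ⌊Real.logb 2 ‖z‖⁻¹⌋₊ := by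
    apply Measurable.nat_floor
    have : Measurable fun z : ℂ => Real.log ‖z‖⁻¹ / Real.log 2 :=
      (Real.measurable_log.comp measurable_norm.inv).div_const _
    simpa [Real.logb] using this
  exact measurable_from_nat.comp h

lemma measurableSet_Ann (n : ℕ) : MeasurableSet (Ann n) :=
  measurableSet_closedBall.diff measurableSet_closedBall

lemma mem_Ann {z : ℂ} {n : ℕ} :
    z ∈ Ann n ↔ (1/2:ℝ)^(n+1) < ‖z‖ ∧ ‖z‖ ≤ (1/2:ℝ)^n := by
  simp only [Ann, Set.mem_diff, Metric.mem_closedBall, dist_zero_right, not_le]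
  exact and_comm

lemma floor_logb_eq {r : ℝ} {n : ℕ} (h1 : (1/2:ℝ)^(n+1) < r) (h2 : r ≤ (1/2:ℝ)^n) :
    ⌊Real.logb 2 r⁻¹⌋₊ = n := by
  have hr : (0:ℝ) < r := lt_trans (by positivity) h1
  have e : ∀ k : ℕ, Real.logb 2 ((1/2:ℝ)^k) = -(k:ℝ) := by
    intro k
    rw [Real.logb_pow, one_div, Real.logb_inv, Real.logb_self_eq_one (by norm_num)]
    ring
  have lb' : Real.logb 2 r ≤ -(n:ℝ) := by
    have := Real.logb_le_logb_of_le (b := 2) (by norm_num) hr h2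
    rwa [e n] at this
  have ub' : -((n:ℝ)+1) < Real.logb 2 r := by
    have := Real.logb_lt_logb (b := 2) (by norm_num) (by positivity) h1
    rw [e (n+1)] at this
    push_cast at this
    linarith
  have lb : (n:ℝ) ≤ Real.logb 2 r⁻¹ := by rw [Real.logb_inv]; linarith
  have ub : Real.logb 2 r⁻¹ < (n:ℝ) + 1 := by rw [Real.logb_inv]; linarith
  rw [Nat.floor_eq_iff (le_trans (Nat.cast_nonneg n) lb)]
  exact ⟨lb, ub⟩

lemma ff_eq {z : ℂ} {n : ℕ} (hz : z ∈ Ann n) : ff z = cf n := by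
  rcases mem_Ann.mp hz with ⟨h1, h2⟩
  unfold ff
  rw [floor_logb_eq h1 h2]

lemma Ann_disjoint : Pairwise (Function.onFun Disjoint Ann) := by
  have key : ∀ m n, m < n → Disjoint (Ann m) (Ann n) := by
    intro m n h
    rw [Set.disjoint_left]
    intro z hzm hzn
    have h1 := (mem_Ann.mp hzm).1
    have h2 := (mem_Ann.mp hzn).2
    have hp : (1/2:ℝ)^n ≤ (1/2:ℝ)^(m+1) :=
      pow_le_pow_of_le_one (by norm_num) (by norm_num) h
    linarith
  intro m n hmn
  rcases hmn.lt_or_gt with h | h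
  · exact key _ _ h
  · exact (key _ _ h).symm

lemma ball_subset : Metric.ball (0:ℂ) 1 ⊆ {0} ∪ ⋃ n, Ann n := by
  intro z hz
  rcases eq_or_ne z 0 with rfl | hz0
  · exact Or.inl rfl
  right
  have hr : 0 < ‖z‖ := norm_pos_iff.mpr hz0
  have hr1 : ‖z‖ < 1 := by simpa using hz
  have hex : ∃ k, (1/2:ℝ)^k < ‖z‖ := exists_pow_lt_of_lt_one hr (by norm_num)
  classical
  have hk : (1/2:ℝ)^(Nat.find hex) < ‖z‖ := Nat.find_spec hex
  have hk0 : Nat.find hex ≠ 0 := by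
    intro h0
    rw [h0, pow_zero] at hk
    linarith
  obtain ⟨m, hm⟩ := Nat.exists_eq_succ_of_ne_zero hk0
  have hmin : ¬ (1/2:ℝ)^m < ‖z‖ := Nat.find_min hex (by omega)
  rw [hm] at hk
  exact Set.mem_iUnion.mpr ⟨m, mem_Ann.mpr ⟨hk, not_lt.mp hmin⟩⟩

lemma quarter_pow (k : ℕ) : ((1/2:ℝ)^k)^2 = (1/4:ℝ)^k := by
  rw [← pow_mul, mul_comm, pow_mul]
  norm_num

lemma vol_cb (k : ℕ) :
    volume (Metric.closedBall (0:ℂ) ((1/2:ℝ)^k)) = ENNReal.ofReal (Real.pi * (1/4:ℝ)^k) := by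
  rw [Complex.volume_closedBall, ← ENNReal.ofReal_pow (by positivity), quarter_pow,
    show ((NNReal.pi : ℝ≥0∞)) = ENNReal.ofReal Real.pi by
      rw [← NNReal.coe_real_pi, ENNReal.ofReal_coe_nnreal],
    ← ENNReal.ofReal_mul (by positivity)]
  ring_nf

lemma vol_Ann (n : ℕ) :
    volume (Ann n) = ENNReal.ofReal (Real.pi * (1/4:ℝ)^n - Real.pi * (1/4:ℝ)^(n+1)) := by
  unfold Ann
  rw [measure_diff (Metric.closedBall_subset_closedBall
        (pow_le_pow_of_le_one (by norm_num) (by norm_num) (Nat.le_succ n)))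
      measurableSet_closedBall.nullMeasurableSet
      (by rw [vol_cb]; exact ENNReal.ofReal_ne_top),
    vol_cb, vol_cb, ← ENNReal.ofReal_sub _ (by positivity)]

lemma key_id (n : ℕ) :
    cf n ^ 2 * (1/4:ℝ)^n * (Real.pi * (1/4:ℝ)^n) = Real.pi / ((n:ℝ)+1)^2 := by
  have h : (4:ℝ)^n * (1/4:ℝ)^n = 1 := by rw [← mul_pow]; norm_num
  have e : cf n ^ 2 * (1/4:ℝ)^n * (Real.pi * (1/4:ℝ)^n)
      = Real.pi / ((n:ℝ)+1)^2 * ((4:ℝ)^n * (1/4:ℝ)^n)^2 := by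
    unfold cf
    have hn : ((n:ℝ)+1) ≠ 0 := by positivity
    field_simp
  rw [e, h]; ring

lemma key_id2 (n : ℕ) :
    cf (n+1) * (Real.pi * (1/4:ℝ)^(n+1) - Real.pi * (1/4:ℝ)^(n+2))
      = (3 * Real.pi / 4) / ((n:ℝ)+2) := by
  have h : (4:ℝ)^(n+1) * (1/4:ℝ)^(n+1) = 1 := by rw [← mul_pow]; norm_num
  have e : cf (n+1) * (Real.pi * (1/4:ℝ)^(n+1) - Real.pi * (1/4:ℝ)^(n+2))
      = (3 * Real.pi / 4) / ((n:ℝ)+2) * ((4:ℝ)^(n+1) * (1/4:ℝ)^(n+1)) := by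
    unfold cf; push_cast; ring
  rw [e, h, mul_one]

/-- The weighted L² integral over each annulus. -/
lemma ann_integral_le (n : ℕ) :
    ∫⁻ z in Ann n, ENNReal.ofReal (ff z) ^ 2 * ENNReal.ofReal (‖z‖ ^ 2)
      ≤ ENNReal.ofReal (Real.pi / ((n:ℝ)+1)^2) := by
  have hb : ∀ z ∈ Ann n,
      ENNReal.ofReal (ff z) ^ 2 * ENNReal.ofReal (‖z‖ ^ 2)
        ≤ ENNReal.ofReal (cf n ^ 2 * (1/4:ℝ)^n) := by
    intro z hz
    rw [ff_eq hz, ← ENNReal.ofReal_pow (cf_pos n).le,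
      ← ENNReal.ofReal_mul (by positivity)]
    apply ENNReal.ofReal_le_ofReal
    have h2 := (mem_Ann.mp hz).2
    have hz2 : ‖z‖^2 ≤ (1/4:ℝ)^n := by
      rw [← quarter_pow]
      have := norm_nonneg z
      nlinarith
    nlinarith [sq_nonneg (cf n)]
  calc ∫⁻ z in Ann n, ENNReal.ofReal (ff z) ^ 2 * ENNReal.ofReal (‖z‖ ^ 2)
      ≤ ∫⁻ _ in Ann n, ENNReal.ofReal (cf n ^ 2 * (1/4:ℝ)^n) :=
        setLIntegral_mono' (measurableSet_Ann n) hb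
    _ = ENNReal.ofReal (cf n ^ 2 * (1/4:ℝ)^n) * volume (Ann n) := setLIntegral_const _ _
    _ ≤ ENNReal.ofReal (cf n ^ 2 * (1/4:ℝ)^n) * ENNReal.ofReal (Real.pi * (1/4:ℝ)^n) := by
        gcongr
        rw [vol_Ann]
        apply ENNReal.ofReal_le_ofReal
        nlinarith [mul_pos Real.pi_pos (pow_pos (show (0:ℝ) < 1/4 by norm_num) (n+1))]
    _ = ENNReal.ofReal (Real.pi / ((n:ℝ)+1)^2) := by
        rw [← ENNReal.ofReal_mul (by positivity), ← key_id n, mul_assoc]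

lemma finiteness :
    (∫⁻ z in Metric.ball (0 : ℂ) 1,
        ENNReal.ofReal (ff z) ^ 2 * ENNReal.ofReal (‖z‖ ^ 2)) < ⊤ := by
  have h1 : (∫⁻ z in Metric.ball (0 : ℂ) 1,
      ENNReal.ofReal (ff z) ^ 2 * ENNReal.ofReal (‖z‖ ^ 2))
      ≤ ∑' n : ℕ, ENNReal.ofReal (Real.pi / ((n:ℝ)+1)^2) := by
    calc (∫⁻ z in Metric.ball (0 : ℂ) 1,
        ENNReal.ofReal (ff z) ^ 2 * ENNReal.ofReal (‖z‖ ^ 2))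
        ≤ ∫⁻ z in ({0} ∪ ⋃ n, Ann n : Set ℂ),
            ENNReal.ofReal (ff z) ^ 2 * ENNReal.ofReal (‖z‖ ^ 2) :=
          lintegral_mono_set ball_subset
      _ ≤ (∫⁻ z in ({0} : Set ℂ),
            ENNReal.ofReal (ff z) ^ 2 * ENNReal.ofReal (‖z‖ ^ 2))
          + ∫⁻ z in (⋃ n, Ann n),
            ENNReal.ofReal (ff z) ^ 2 * ENNReal.ofReal (‖z‖ ^ 2) :=
          lintegral_union_le _ _ _
      _ ≤ 0 + ∑' n, ∫⁻ z in Ann n,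
            ENNReal.ofReal (ff z) ^ 2 * ENNReal.ofReal (‖z‖ ^ 2) := by
          gcongr
          · exact le_of_eq (setLIntegral_measure_zero _ _ (measure_singleton 0))
          · exact lintegral_iUnion_le _ _
      _ ≤ 0 + ∑' n : ℕ, ENNReal.ofReal (Real.pi / ((n:ℝ)+1)^2) := by
          gcongr with n
          exact ann_integral_le n
      _ = ∑' n : ℕ, ENNReal.ofReal (Real.pi / ((n:ℝ)+1)^2) := zero_add _
  have hsum : Summable (fun n : ℕ => Real.pi / ((n:ℝ)+1)^2) := by
    have h0 : Summable (fun n : ℕ => 1 / ((n:ℝ))^2) :=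
      Real.summable_one_div_nat_pow.mpr one_lt_two
    have h1 : Summable (fun n : ℕ => 1 / (((n:ℝ))+1)^2) := by
      have := (summable_nat_add_iff 1).mpr h0
      simpa [Nat.cast_add] using this
    simpa [div_eq_mul_inv, one_mul] using h1.mul_left Real.pi
  calc (∫⁻ z in Metric.ball (0 : ℂ) 1,
      ENNReal.ofReal (ff z) ^ 2 * ENNReal.ofReal (‖z‖ ^ 2))
      ≤ ∑' n : ℕ, ENNReal.ofReal (Real.pi / ((n:ℝ)+1)^2) := h1
    _ = ENNReal.ofReal (∑' n : ℕ, Real.pi / ((n:ℝ)+1)^2) :=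
        (ENNReal.ofReal_tsum_of_nonneg (fun n => by positivity) hsum).symm
    _ < ⊤ := ENNReal.ofReal_lt_top

lemma lint_ff_top :
    ∫⁻ z in Metric.ball (0:ℂ) 1, ENNReal.ofReal (ff z) = ⊤ := by
  have hsub : (⋃ n, Ann (n+1)) ⊆ Metric.ball (0:ℂ) 1 := by
    intro z hz
    obtain ⟨n, hn⟩ := Set.mem_iUnion.mp hz
    have h2 := (mem_Ann.mp hn).2
    have h12 : (1/2:ℝ)^(n+1) ≤ (1/2:ℝ)^1 :=
      pow_le_pow_of_le_one (by norm_num) (by norm_num) (by omega)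
    have : (1/2:ℝ)^(n+1) ≤ 1/2 := by simpa using h12
    rw [Metric.mem_ball, dist_zero_right]
    linarith
  have hdisj : Pairwise (Function.onFun Disjoint fun n => Ann (n+1)) := by
    intro m n hmn
    exact Ann_disjoint (by omega)
  have hunion : ∫⁻ z in (⋃ n, Ann (n+1)), ENNReal.ofReal (ff z)
      = ∑' n, ∫⁻ z in Ann (n+1), ENNReal.ofReal (ff z) :=
    lintegral_iUnion (fun n => measurableSet_Ann (n+1)) hdisj _
  have hterm : ∀ n, ∫⁻ z in Ann (n+1), ENNReal.ofReal (ff z)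
      = ENNReal.ofReal ((3 * Real.pi / 4) / ((n:ℝ)+2)) := by
    intro n
    rw [setLIntegral_congr_fun (measurableSet_Ann (n+1))
        (fun z hz => by rw [ff_eq hz]),
      setLIntegral_const, vol_Ann, ← ENNReal.ofReal_mul (cf_pos (n+1)).le, key_id2]
  have htop : (∑' n : ℕ, ENNReal.ofReal ((3 * Real.pi / 4) / ((n:ℝ)+2))) = ⊤ := by
    by_contra h
    have hs := ENNReal.summable_toReal h
    have hs' : Summable (fun n : ℕ => (3 * Real.pi / 4) / ((n:ℝ)+2)) := by
      have : ∀ n : ℕ, (ENNReal.ofReal ((3 * Real.pi / 4) / ((n:ℝ)+2))).toReal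
          = (3 * Real.pi / 4) / ((n:ℝ)+2) := fun n =>
        ENNReal.toReal_ofReal (by positivity)
      simpa [this] using hs
    have hs'' : Summable (fun n : ℕ => 1 / ((n:ℝ)+2)) := by
      have h3 : (3 * Real.pi / 4) ≠ 0 := by positivity
      refine (hs'.mul_left (3 * Real.pi / 4)⁻¹).congr fun n => ?_
      have hn2 : ((n:ℝ)+2) ≠ 0 := by positivity
      field_simp
    have hs3 : Summable (fun n : ℕ => 1 / ((n:ℕ) : ℝ)) := by
      have : Summable (fun n : ℕ => 1 / (((n+2:ℕ)):ℝ)) := by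
        simpa [Nat.cast_add] using hs''
      exact (summable_nat_add_iff 2).mp this
    exact Real.not_summable_one_div_natCast hs3
  refine eq_top_iff.mpr ?_
  calc (⊤ : ℝ≥0∞) = ∑' n : ℕ, ENNReal.ofReal ((3 * Real.pi / 4) / ((n:ℝ)+2)) := htop.symm
    _ = ∫⁻ z in (⋃ n, Ann (n+1)), ENNReal.ofReal (ff z) := by
        rw [hunion]; exact (tsum_congr hterm).symm
    _ ≤ ∫⁻ z in Metric.ball (0:ℂ) 1, ENNReal.ofReal (ff z) :=
        lintegral_mono_set hsub

lemma inner_top {z : ℂ} (hz : z ∈ Metric.ball (0:ℂ) 1) :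
    ∫⁻ ζ in Metric.ball (0:ℂ) 1,
        ENNReal.ofReal (ff ζ) / ENNReal.ofReal ‖ζ - z‖ = ⊤ := by
  have hz1 : ‖z‖ < 1 := by simpa using hz
  have hb : ∀ ζ ∈ Metric.ball (0:ℂ) 1,
      ENNReal.ofReal (ff ζ) * (ENNReal.ofReal 2)⁻¹
        ≤ ENNReal.ofReal (ff ζ) / ENNReal.ofReal ‖ζ - z‖ := by
    intro ζ hζ
    have hζ1 : ‖ζ‖ < 1 := by simpa using hζ
    have hle : ‖ζ - z‖ ≤ 2 := by
      calc ‖ζ - z‖ ≤ ‖ζ‖ + ‖z‖ := norm_sub_le _ _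
        _ ≤ 2 := by linarith
    rw [← div_eq_mul_inv]
    exact ENNReal.div_le_div_left (ENNReal.ofReal_le_ofReal hle) _
  have hge : ∫⁻ ζ in Metric.ball (0:ℂ) 1,
      ENNReal.ofReal (ff ζ) * (ENNReal.ofReal 2)⁻¹
        ≤ ∫⁻ ζ in Metric.ball (0:ℂ) 1,
        ENNReal.ofReal (ff ζ) / ENNReal.ofReal ‖ζ - z‖ :=
    setLIntegral_mono' Metric.isOpen_ball.measurableSet hb
  have heq : ∫⁻ ζ in Metric.ball (0:ℂ) 1,
      ENNReal.ofReal (ff ζ) * (ENNReal.ofReal 2)⁻¹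
      = (∫⁻ ζ in Metric.ball (0:ℂ) 1, ENNReal.ofReal (ff ζ)) * (ENNReal.ofReal 2)⁻¹ :=
    lintegral_mul_const' _ _ (by simp)
  rw [heq, lint_ff_top] at hge
  have : (⊤ : ℝ≥0∞) * (ENNReal.ofReal 2)⁻¹ = ⊤ := by
    rw [ENNReal.top_mul]
    simp [ENNReal.inv_ne_zero]
  rw [this, top_le_iff] at hge
  exact hge

end RieszCE

/-- There exists a (nonnegative) function `f ∈ L²(△, |z|² dV)` on the unit disc `△ ⊂ ℂ`
such that `R₁f(z) = ∫_△ f(ζ)/|ζ−z| dV(ζ)` does not belong to `L²(△, |z|² dV)`; hence the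
weighted boundedness of `R_α` on `L^p(D,μ)` fails in general without the assumption
`μ ∈ A_p`. -/
theorem riesz_weighted_counterexample :
    ∃ f : ℂ → ℝ, Measurable f ∧ (∀ z, 0 ≤ f z) ∧
      (∫⁻ z in Metric.ball (0 : ℂ) 1,
          ENNReal.ofReal (f z) ^ 2 * ENNReal.ofReal (‖z‖ ^ 2)) < ⊤ ∧
      (∫⁻ z in Metric.ball (0 : ℂ) 1,
          (∫⁻ ζ in Metric.ball (0 : ℂ) 1,
              ENNReal.ofReal (f ζ) / ENNReal.ofReal ‖ζ - z‖) ^ 2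
            * ENNReal.ofReal (‖z‖ ^ 2)) = ⊤ := by
  refine ⟨RieszCE.ff, RieszCE.measurable_ff, RieszCE.ff_nonneg, RieszCE.finiteness, ?_⟩
  refine eq_top_iff.mpr ?_
  have hmeas : MeasurableSet (Metric.ball (0:ℂ) 1 \ {0}) :=
    Metric.isOpen_ball.measurableSet.diff (measurableSet_singleton 0)
  have hcongr : ∫⁻ z in (Metric.ball (0:ℂ) 1 \ {0} : Set ℂ),
      (∫⁻ ζ in Metric.ball (0 : ℂ) 1,
          ENNReal.ofReal (RieszCE.ff ζ) / ENNReal.ofReal ‖ζ - z‖) ^ 2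
        * ENNReal.ofReal (‖z‖ ^ 2)
      = ∫⁻ _ in (Metric.ball (0:ℂ) 1 \ {0} : Set ℂ), (⊤ : ℝ≥0∞) := by
    apply setLIntegral_congr_fun hmeas
    intro z hz
    beta_reduce
    rw [RieszCE.inner_top hz.1]
    have hz0 : z ≠ 0 := hz.2
    have hpos : 0 < ‖z‖ ^ 2 := pow_pos (norm_pos_iff.mpr hz0) 2
    have hne : ENNReal.ofReal (‖z‖ ^ 2) ≠ 0 := by
      rw [Ne, ENNReal.ofReal_eq_zero]
      exact not_le_of_gt hpos
    rw [ENNReal.top_pow (by norm_num), ENNReal.top_mul hne]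
  have hvol : volume (Metric.ball (0:ℂ) 1 \ {0} : Set ℂ) ≠ 0 := by
    rw [measure_diff_null (measure_singleton 0), Complex.volume_ball]
    simp [NNReal.pi_ne_zero]
  calc (⊤ : ℝ≥0∞)
      = ∫⁻ _ in (Metric.ball (0:ℂ) 1 \ {0} : Set ℂ), (⊤ : ℝ≥0∞) := by
        rw [setLIntegral_const, ENNReal.top_mul hvol]
    _ = ∫⁻ z in (Metric.ball (0:ℂ) 1 \ {0} : Set ℂ),
        (∫⁻ ζ in Metric.ball (0 : ℂ) 1,
            ENNReal.ofReal (RieszCE.ff ζ) / ENNReal.ofReal ‖ζ - z‖) ^ 2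
          * ENNReal.ofReal (‖z‖ ^ 2) := hcongr.symm
    _ ≤ _ := lintegral_mono_set Set.diff_subset
end
end

section
/- The map ψ : △ × △* → ℍ, ψ(w₁, w₂) = (w₁w₂, w₂), is a biholomorphism from the product of the unit disc and the punctured unit disc onto the Hartogs triangle, with holomorphic inverse φ(z₁, z₂) = (z₁/z₂, z₂). -/
open MeasureTheory

noncomputable section

/-- The Hartogs triangle `ℍ = {(z₁,z₂) ∈ ℂ² : |z₁| < |z₂| < 1}`. -/
def hartogsTriangle : Set (ℂ × ℂ) := {z | ‖z.1‖ < ‖z.2‖ ∧ ‖z.2‖ < 1}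

/-- `ψ(w₁,w₂) = (w₁w₂, w₂)`. -/
def psiMap (w : ℂ × ℂ) : ℂ × ℂ := (w.1 * w.2, w.2)

/-- `φ(z₁,z₂) = (z₁/z₂, z₂)`. -/
def phiMap (z : ℂ × ℂ) : ℂ × ℂ := (z.1 / z.2, z.2)

lemma mem_hartogs_ne  {z : ℂ × ℂ} (hz : z ∈ hartogsTriangle) : z.2 ≠ 0 := by
  intro h
  rcases hz with ⟨h1, _⟩
  rw [h] at h1
  simp at h1
  exact absurd h1 (norm_nonneg _).not_gt

/-- The map `ψ : △ × △* → ℍ`, `ψ(w₁,w₂) = (w₁w₂, w₂)`, is a biholomorphism from the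
product of the unit disc and the punctured unit disc onto the Hartogs triangle, with
holomorphic inverse `φ(z₁,z₂) = (z₁/z₂, z₂)`. -/
theorem psi_biholo_hartogs :
    Set.BijOn psiMap ((Metric.ball (0 : ℂ) 1) ×ˢ (Metric.ball (0 : ℂ) 1 \ {0}))
        hartogsTriangle ∧
    DifferentiableOn ℂ psiMap ((Metric.ball (0 : ℂ) 1) ×ˢ (Metric.ball (0 : ℂ) 1 \ {0})) ∧
    DifferentiableOn ℂ phiMap hartogsTriangle ∧
    Set.EqOn (phiMap ∘ psiMap) id ((Metric.ball (0 : ℂ) 1) ×ˢ (Metric.ball (0 : ℂ) 1 \ {0})) ∧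
    Set.EqOn (psiMap ∘ phiMap) id hartogsTriangle := by
  have hleft : Set.EqOn (phiMap ∘ psiMap) id
      ((Metric.ball (0 : ℂ) 1) ×ˢ (Metric.ball (0 : ℂ) 1 \ {0})) := by
    rintro ⟨w1, w2⟩ ⟨_, _, hw2⟩
    simp only [Set.mem_singleton_iff] at hw2
    simp [phiMap, psiMap, mul_div_assoc, div_self hw2]
  have hright : Set.EqOn (psiMap ∘ phiMap) id hartogsTriangle := by
    intro z hz
    have h2 := mem_hartogs_ne hz
    simp [phiMap, psiMap, div_mul_cancel₀ _ h2]
  have hmaps : Set.MapsTo psiMap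
      ((Metric.ball (0 : ℂ) 1) ×ˢ (Metric.ball (0 : ℂ) 1 \ {0})) hartogsTriangle := by
    rintro ⟨w1, w2⟩ ⟨h1, h2, hw2⟩
    simp only [Metric.mem_ball, dist_zero_right] at h1 h2
    simp only [Set.mem_singleton_iff] at hw2
    constructor
    · simp only [psiMap, norm_mul]
      calc ‖w1‖ * ‖w2‖ < 1 * ‖w2‖ := by
            apply mul_lt_mul_of_pos_right h1
            simpa [norm_pos_iff] using hw2
        _ = ‖w2‖ := one_mul _
    · exact h2
  refine ⟨⟨hmaps, ?_, ?_⟩, ?_, ?_, hleft, hright⟩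
  · intro x hx y hy hxy
    have := congrArg phiMap hxy
    have hx' := hleft hx
    have hy' := hleft hy
    simpa [Function.comp, hx', hy'] using (hx'.symm.trans (this.trans hy'))
  · intro z hz
    refine ⟨phiMap z, ?_, hright hz⟩
    have h2 := mem_hartogs_ne hz
    rcases hz with ⟨h1, hlt⟩
    refine ⟨?_, ?_, ?_⟩
    · simp only [phiMap, Metric.mem_ball, dist_zero_right, norm_div]
      rw [div_lt_one (by simpa [norm_pos_iff] using h2)]
      exact h1
    · simpa [phiMap, Metric.mem_ball] using hlt
    · simpa [phiMap] using h2
  · apply DifferentiableOn.prodMk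
    · exact ((differentiable_fst.mul differentiable_snd)).differentiableOn
    · exact differentiable_snd.differentiableOn
  · apply DifferentiableOn.prodMk
    · intro z hz
      have h1 : DifferentiableAt ℂ (fun x : ℂ × ℂ => x.1) z := differentiableAt_fst
      have h2 : DifferentiableAt ℂ (fun x : ℂ × ℂ => x.2) z := differentiableAt_snd
      have : DifferentiableAt ℂ (fun x : ℂ × ℂ => x.1 * (x.2)⁻¹) z :=
        h1.mul (h2.inv (mem_hartogs_ne hz))
      simpa [div_eq_mul_inv] using this.differentiableWithinAt
    · exact differentiable_snd.differentiableOn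
end
end
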